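/- The M-Wright function of order 1/2 is a Gaussian: M_{1/2}(z) := W(-1/2, 1/2 | -z) = e^{-z²/4}/√π for all real z. -/

import Mathlib

set_option autoImplicit false

open Real

lemma gamma_half_sub_nat (m : ℕ) :
    Real.Gamma (1/2 - m) =
      (-1)^m * 4^m * m.factorial * Real.sqrt Real.pi / (2*m).factorial := by
  induction m with
  | zero => simpa using Real.Gamma_one_half_eq
  | succ m ih =>
    have hm : (0:ℝ) ≤ m := Nat.cast_nonneg m
    have hx : (-(1:ℝ)/2 - m) ≠ 0 := by nlinarith
    have h := Real.Gamma_add_one hx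
    have e1 : (-(1:ℝ)/2 - m) + 1 = 1/2 - m := by ring
    rw [e1] at h
    have e2 : (1:ℝ)/2 - ((m:ℕ)+1:ℕ) = -(1:ℝ)/2 - m := by push_cast; ring
    have h2 : Real.Gamma (1/2 - ((m+1:ℕ):ℝ)) = Real.Gamma (1/2 - m) / (-(1:ℝ)/2 - m) := by
      rw [e2, eq_div_iff hx, h, mul_comm]
    have h2m : ((2*(m+1)).factorial : ℝ) = (2*(m:ℝ)+2) * (2*(m:ℝ)+1) * (2*m).factorial := by
      have e : 2*(m+1) = (2*m+1) + 1 := by ring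
      rw [e, Nat.factorial_succ, Nat.factorial_succ]
      push_cast; ring
    have hfac : ((2*m).factorial : ℝ) ≠ 0 := Nat.cast_ne_zero.2 (Nat.factorial_ne_zero _)
    have hfac2 : ((2*(m+1)).factorial : ℝ) ≠ 0 := Nat.cast_ne_zero.2 (Nat.factorial_ne_zero _)
    rw [h2, ih, div_div, div_eq_div_iff (mul_ne_zero hfac hx) hfac2, h2m,
      Nat.factorial_succ, pow_succ, pow_succ]
    push_cast
    ring

theorem mwright_half_eq_gaussian (z : ℝ) :
    (∑' k : ℕ, (-z) ^ k /
        ((k.factorial : ℝ) * Real.Gamma (-(1 / 2) * k + 1 / 2)))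
      = Real.exp (-z ^ 2 / 4) / Real.sqrt Real.pi := by
  set f : ℕ → ℝ := fun k => (-z) ^ k /
      ((k.factorial : ℝ) * Real.Gamma (-(1 / 2) * k + 1 / 2)) with hf
  have hinj : Function.Injective (fun m : ℕ => 2 * m) := by
    intro a b h
    dsimp only at h
    omega
  have hsupp : Function.support f ⊆ Set.range (fun m : ℕ => 2 * m) := by
    intro k hk
    rcases Nat.even_or_odd k with ⟨m, rfl⟩ | ⟨m, rfl⟩
    · exact ⟨m, by dsimp only; omega⟩
    · exfalso
      apply hk
      have e : -(1/2 : ℝ) * ((2*m+1 : ℕ) : ℝ) + 1/2 = -(m : ℝ) := by push_cast; ring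
      show (-z) ^ (2*m+1) /
        (((2*m+1).factorial : ℝ) * Real.Gamma (-(1 / 2) * ((2*m+1 : ℕ) : ℝ) + 1 / 2)) = 0
      rw [e, Real.Gamma_neg_nat_eq_zero, mul_zero, div_zero]
  have key : ∀ m : ℕ, f (2*m) = (-(z^2/4))^m / m.factorial / Real.sqrt Real.pi := by
    intro m
    have e : -(1/2 : ℝ) * ((2*m : ℕ) : ℝ) + 1/2 = 1/2 - m := by push_cast; ring
    have hfac : ((2*m).factorial : ℝ) ≠ 0 := Nat.cast_ne_zero.2 (Nat.factorial_ne_zero _)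
    have hmf : ((m.factorial : ℝ)) ≠ 0 := Nat.cast_ne_zero.2 (Nat.factorial_ne_zero _)
    have hsp : Real.sqrt Real.pi ≠ 0 := ne_of_gt (Real.sqrt_pos.2 Real.pi_pos)
    have hpow : ((-z) ^ (2*m) : ℝ) = (z^2)^m := by
      rw [pow_mul]; ring_nf
    show (-z) ^ (2*m) /
        (((2*m).factorial : ℝ) * Real.Gamma (-(1 / 2) * ((2*m : ℕ) : ℝ) + 1 / 2))
        = (-(z^2/4))^m / m.factorial / Real.sqrt Real.pi
    rw [e, gamma_half_sub_nat, hpow]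
    have h1 : ((-1:ℝ))^m * (-1)^m = 1 := by
      rw [← pow_add]
      exact Even.neg_one_pow ⟨m, rfl⟩
    have hne : ((-1:ℝ))^m ≠ 0 := by
      intro h0
      rw [h0, mul_zero] at h1
      norm_num at h1
    field_simp
    ring_nf
    simp [pow_mul', neg_one_sq]
    rw [mul_assoc, mul_assoc, ← mul_pow, ← mul_pow]; norm_num
  calc (∑' k, f k) = ∑' m, f (2*m) := (hinj.tsum_eq hsupp).symm
    _ = ∑' m, (-(z^2/4))^m / m.factorial / Real.sqrt Real.pi := tsum_congr key
    _ = (∑' m : ℕ, (-(z^2/4))^m / m.factorial) / Real.sqrt Real.pi := tsum_div_const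
    _ = Real.exp (-z ^ 2 / 4) / Real.sqrt Real.pi := by
        rw [Real.exp_eq_exp_ℝ, NormedSpace.exp_eq_tsum_div]
        congr 1
        apply tsum_congr
        intro n
        congr 1
        ring
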